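/- Let K be a field of characteristic zero. In the planar Cremona group Cr₂(K), let s be the automorphism with s(x) = x + 1, s(y) = y; let a be the automorphism with a(x) = x, a(y) = y + 1; and let m be the automorphism with m(x) = x, m(y) = x·y. Then the subgroup G of Cr₂(K) generated by {s, a, m} is torsion-free: every element of G of finite order is the identity. -/

import Mathlib

open MvPolynomial

set_option maxHeartbeats 1000000
set_option synthInstance.maxHeartbeats 200000

/-- The rational function field `K(X,Y)`, realized as the fraction field of the polynomial
ring in two variables. Its group of `K`-algebra automorphisms is the planar Cremona
group `Cr₂(K)`. -/
noncomputable abbrev CremonaField (K : Type*) [Field K] : Type _ :=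
  FractionRing (MvPolynomial (Fin 2) K)

/-- The image of the first variable in `K(X,Y)`. -/
noncomputable def genX (K : Type*) [Field K] : CremonaField K :=
  algebraMap (MvPolynomial (Fin 2) K) (CremonaField K) (X 0)

/-- The image of the second variable in `K(X,Y)`. -/
noncomputable def genY (K : Type*) [Field K] : CremonaField K :=
  algebraMap (MvPolynomial (Fin 2) K) (CremonaField K) (X 1)

/-- A monoid is torsion-free if no nontrivial element has finite order
(the definition of `Monoid.IsTorsionFree` in the older Mathlib, since removed). -/
def Monoid.IsTorsionFree (G : Type*) [Monoid G] : Prop :=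
  ∀ g : G, g ≠ 1 → ¬IsOfFinOrder g


section Aux
variable (K : Type*) [Field K] [CharZero K]

abbrev CremL := CremonaField K

instance : CharZero (CremonaField K) :=
  charZero_of_injective_algebraMap (algebraMap K (CremonaField K)).injective

lemma algMap_inj : Function.Injective
    (algebraMap (MvPolynomial (Fin 2) K) (CremonaField K)) :=
  IsFractionRing.injective _ _

lemma intCast_eq_C (j : ℤ) :
    ((j : ℤ) : MvPolynomial (Fin 2) K) = C ((j : ℤ) : K) := by
  rw [← map_intCast (algebraMap K (MvPolynomial (Fin 2) K)) j,
    MvPolynomial.algebraMap_eq]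

lemma X0_add_int_ne (j : ℤ) : (X 0 + (j : MvPolynomial (Fin 2) K)) ≠ 0 := by
  intro h
  rw [intCast_eq_C] at h
  have := congrArg (MvPolynomial.coeff (Finsupp.single 0 1)) h
  rw [MvPolynomial.coeff_add, MvPolynomial.coeff_X, MvPolynomial.coeff_C] at this
  rw [if_neg (Finsupp.single_ne_zero.mpr one_ne_zero).symm] at this
  simp at this

lemma genX_add_int (j : ℤ) :
    genX K + (j : CremonaField K)
      = algebraMap (MvPolynomial (Fin 2) K) (CremonaField K)
          (X 0 + (j : MvPolynomial (Fin 2) K)) := by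
  simp [genX, map_add, map_intCast]

lemma genX_add_int_ne (j : ℤ) : genX K + (j : CremonaField K) ≠ 0 := by
  rw [genX_add_int]
  intro h
  exact X0_add_int_ne K j (algMap_inj K (by simpa using h))

lemma fix_ext (σ : CremonaField K ≃ₐ[K] CremonaField K)
    (hx : σ (genX K) = genX K) (hy : σ (genY K) = genY K) : σ = 1 := by
  have key : (σ : CremonaField K →+* CremonaField K) = RingHom.id _ := by
    apply IsLocalization.ringHom_ext (nonZeroDivisors (MvPolynomial (Fin 2) K))
    apply MvPolynomial.ringHom_ext
    · intro r
      have : (algebraMap (MvPolynomial (Fin 2) K) (CremonaField K)) (C r)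
          = algebraMap K (CremonaField K) r := by
        rw [← MvPolynomial.algebraMap_eq, ← IsScalarTower.algebraMap_apply]
      simp only [RingHom.comp_apply, this, RingHom.id_apply]
      exact σ.commutes r
    · intro i
      fin_cases i
      · exact hx
      · exact hy
  ext z
  exact congrFun (congrArg (⇑) key) z

end Aux

section Aux2
variable (K : Type*) [Field K] [CharZero K]

/-- The subfield `K(x)`. -/
noncomputable def Fx : IntermediateField K (CremonaField K) :=
  IntermediateField.adjoin K {genX K}

lemma genX_mem_Fx : genX K ∈ Fx K :=
  IntermediateField.subset_adjoin K _ rfl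

variable {K}

lemma map_mem_Fx (σ : CremonaField K ≃ₐ[K] CremonaField K)
    (hσ : σ (genX K) ∈ Fx K) {z : CremonaField K} (hz : z ∈ Fx K) :
    σ z ∈ Fx K := by
  induction hz using IntermediateField.adjoin_induction with
  | mem w hw => rw [Set.mem_singleton_iff] at hw; rw [hw]; exact hσ
  | algebraMap w => rw [AlgEquiv.commutes]; exact IntermediateField.algebraMap_mem _ _
  | add w₁ w₂ _ _ h1 h2 => rw [map_add]; exact add_mem h1 h2
  | inv w _ h1 => rw [map_inv₀]; exact inv_mem h1
  | mul w₁ w₂ _ _ h1 h2 => rw [map_mul]; exact mul_mem h1 h2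

lemma map_fix_Fx (σ : CremonaField K ≃ₐ[K] CremonaField K)
    (hσ : σ (genX K) = genX K) {z : CremonaField K} (hz : z ∈ Fx K) :
    σ z = z := by
  induction hz using IntermediateField.adjoin_induction with
  | mem w hw => rw [Set.mem_singleton_iff] at hw; rw [hw]; exact hσ
  | algebraMap w => rw [AlgEquiv.commutes]
  | add w₁ w₂ _ _ h1 h2 => rw [map_add, h1, h2]
  | inv w _ h1 => rw [map_inv₀, h1]
  | mul w₁ w₂ _ _ h1 h2 => rw [map_mul, h1, h2]

lemma genY_not_mem_Fx (a : CremonaField K ≃ₐ[K] CremonaField K)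
    (hax : a (genX K) = genX K) (hay : a (genY K) = genY K + 1) :
    genY K ∉ Fx K := by
  intro h
  have := map_fix_Fx a hax h
  rw [hay] at this
  exact one_ne_zero (by linear_combination this : (1 : CremonaField K) = 0)

variable (K)

/-- The unit `x + j`. -/
noncomputable def xunit (j : ℤ) : (CremonaField K)ˣ :=
  Units.mk0 (genX K + (j : CremonaField K)) (genX_add_int_ne K j)

/-- The subgroup of units generated by the `x + j`. -/
noncomputable def Ux : Subgroup (CremonaField K)ˣ :=
  Subgroup.closure (Set.range (xunit K))

variable {K}

/-- An algebra automorphism as a monoid hom on units. -/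
noncomputable def umap (σ : CremonaField K ≃ₐ[K] CremonaField K) :
    (CremonaField K)ˣ →* (CremonaField K)ˣ :=
  Units.map (σ : CremonaField K →* CremonaField K)

@[simp] lemma umap_coe (σ : CremonaField K ≃ₐ[K] CremonaField K)
    (u : (CremonaField K)ˣ) : ((umap σ u : (CremonaField K)ˣ) : CremonaField K) = σ u := rfl

lemma umap_mem_Ux (σ : CremonaField K ≃ₐ[K] CremonaField K) (c : ℤ)
    (hσ : σ (genX K) = genX K + c) {u : (CremonaField K)ˣ} (hu : u ∈ Ux K) :
    umap σ u ∈ Ux K := by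
  induction hu using Subgroup.closure_induction with
  | mem w hw =>
    obtain ⟨j, rfl⟩ := hw
    have : umap σ (xunit K j) = xunit K (j + c) := by
      apply Units.ext
      rw [umap_coe]
      show σ (genX K + (j : CremonaField K)) = genX K + ((j + c : ℤ) : CremonaField K)
      rw [map_add, hσ, map_intCast]
      push_cast
      ring
    rw [this]
    exact Subgroup.subset_closure ⟨j + c, rfl⟩
  | one => rw [map_one]; exact one_mem _
  | mul w₁ w₂ _ _ h1 h2 => rw [map_mul]; exact mul_mem h1 h2
  | inv w _ h1 => rw [map_inv]; exact inv_mem h1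

lemma Ux_mem_Fx {u : (CremonaField K)ˣ} (hu : u ∈ Ux K) :
    (u : CremonaField K) ∈ Fx K := by
  induction hu using Subgroup.closure_induction with
  | mem w hw =>
    obtain ⟨j, rfl⟩ := hw
    exact add_mem (genX_mem_Fx K) (IntermediateField.intCast_mem _ _)
  | one => exact one_mem _
  | mul w₁ w₂ _ _ h1 h2 => rw [Units.val_mul]; exact mul_mem h1 h2
  | inv w _ h1 => rw [Units.val_inv_eq_inv_val]; exact inv_mem h1

/-- Every element of `Ux` is a product of powers of the `x + j`. -/
lemma Ux_rep {u : (CremonaField K)ˣ} (hu : u ∈ Ux K) :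
    ∃ ν : ℤ →₀ ℤ, (u : CremonaField K)
      = ν.prod fun j k => (genX K + (j : CremonaField K)) ^ k := by
  induction hu using Subgroup.closure_induction with
  | mem w hw =>
    obtain ⟨j, rfl⟩ := hw
    refine ⟨Finsupp.single j 1, ?_⟩
    rw [Finsupp.prod_single_index (by simp)]
    simp [xunit]
  | one => exact ⟨0, by simp⟩
  | mul w₁ w₂ _ _ h1 h2 =>
    obtain ⟨ν₁, e1⟩ := h1
    obtain ⟨ν₂, e2⟩ := h2
    refine ⟨ν₁ + ν₂, ?_⟩
    rw [Finsupp.prod_add_index' (fun j => zpow_zero _)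
      (fun j k₁ k₂ => zpow_add₀ (genX_add_int_ne K j) _ _), Units.val_mul, e1, e2]
  | inv w _ h1 =>
    obtain ⟨ν, e⟩ := h1
    refine ⟨-ν, ?_⟩
    have key : ((-ν).prod fun j k => (genX K + (j : CremonaField K)) ^ k)
        * (ν.prod fun j k => (genX K + (j : CremonaField K)) ^ k) = 1 := by
      rw [← Finsupp.prod_add_index' (fun j => zpow_zero _)
        (fun j k₁ k₂ => zpow_add₀ (genX_add_int_ne K j) _ _)]
      simp
    rw [← e] at key
    rw [Units.val_inv_eq_inv_val]
    exact inv_eq_of_mul_eq_one_left key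
end Aux2

section Indep
variable {K : Type*} [Field K] [CharZero K]

lemma X_add_intCast_ne_zero (j : ℤ) : (Polynomial.X + ((j : ℤ) : Polynomial K)) ≠ 0 := by
  rw [← map_intCast (Polynomial.C : K →+* Polynomial K) j]
  exact (Polynomial.monic_X_add_C _).ne_zero

lemma count_prod_roots [DecidableEq K] (t : Finset ℤ) (c : ℤ → ℕ) (j0 : ℤ) (hj0 : j0 ∈ t) :
    Multiset.count (-(j0 : K))
      (∏ j ∈ t, (Polynomial.X + ((j : ℤ) : Polynomial K)) ^ (c j)).roots = c j0 := by
  have hne : ∀ j ∈ t, (Polynomial.X + ((j : ℤ) : Polynomial K)) ^ (c j) ≠ 0 :=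
    fun j _ => pow_ne_zero _ (X_add_intCast_ne_zero j)
  have hprod : (∏ j ∈ t, (Polynomial.X + ((j : ℤ) : Polynomial K)) ^ (c j)) ≠ 0 :=
    Finset.prod_ne_zero_iff.mpr hne
  rw [Polynomial.roots_prod _ _ hprod]
  have hroots : ∀ j : ℤ, ((Polynomial.X + ((j : ℤ) : Polynomial K)) ^ (c j)).roots
      = (c j) • ({-(j : K)} : Multiset K) := by
    intro j
    rw [Polynomial.roots_pow]
    congr 1
    rw [← map_intCast (Polynomial.C : K →+* Polynomial K) j,
      show Polynomial.X + Polynomial.C ((j : ℤ) : K)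
        = Polynomial.X - Polynomial.C (-((j : ℤ) : K)) by
          rw [map_neg, sub_neg_eq_add], Polynomial.roots_X_sub_C]
  rw [Multiset.count_bind]
  have : (Multiset.map (fun j => Multiset.count (-(j0 : K))
      (((Polynomial.X + ((j : ℤ) : Polynomial K)) ^ (c j)).roots)) t.val).sum
      = ∑ j ∈ t, Multiset.count (-(j0 : K)) (((Polynomial.X + ((j : ℤ) : Polynomial K)) ^ (c j)).roots) := rfl
  rw [this]
  rw [Finset.sum_congr rfl (fun j _ => by
    rw [hroots j, Multiset.count_nsmul, Multiset.count_singleton])]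
  rw [Finset.sum_eq_single j0]
  · simp
  · intro j hj hjne
    rw [if_neg, mul_zero]
    intro hc
    exact hjne (by exact_mod_cast (neg_inj.mp hc).symm)
  · intro h; exact absurd hj0 h

lemma indep (t : Finset ℤ) (e : ℤ → ℤ)
    (h1 : ∏ j ∈ t, (genX K + ((j : ℤ) : CremonaField K)) ^ (e j) = 1) :
    ∀ j0 ∈ t, e j0 = 0 := by
  intro j0 hj0
  set a : ℤ → ℕ := fun j => (e j).toNat with ha
  set b : ℤ → ℕ := fun j => (-(e j)).toNat with hb
  have hab : ∀ j, (a j : ℤ) = e j + (b j) := by intro j; simp [ha, hb]; omega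
  -- products of natural powers agree in L
  have hL : ∏ j ∈ t, (genX K + ((j : ℤ) : CremonaField K)) ^ (a j)
      = ∏ j ∈ t, (genX K + ((j : ℤ) : CremonaField K)) ^ (b j) := by
    have : ∀ j ∈ t, (genX K + ((j : ℤ) : CremonaField K)) ^ (a j)
        = (genX K + ((j : ℤ) : CremonaField K)) ^ (e j)
          * (genX K + ((j : ℤ) : CremonaField K)) ^ (b j) := by
      intro j _
      rw [← zpow_natCast, ← zpow_natCast, hab j, zpow_add₀ (genX_add_int_ne K j)]
    rw [Finset.prod_congr rfl this, Finset.prod_mul_distrib, h1, one_mul]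
  -- pull back to MvPolynomial
  have hpoly : (∏ j ∈ t, (X 0 + ((j : ℤ) : MvPolynomial (Fin 2) K)) ^ (a j))
      = ∏ j ∈ t, (X 0 + ((j : ℤ) : MvPolynomial (Fin 2) K)) ^ (b j) := by
    apply algMap_inj K
    rw [map_prod, map_prod]
    calc ∏ j ∈ t, (algebraMap (MvPolynomial (Fin 2) K) (CremonaField K))
          ((X 0 + ((j : ℤ) : MvPolynomial (Fin 2) K)) ^ (a j))
        = ∏ j ∈ t, (genX K + ((j : ℤ) : CremonaField K)) ^ (a j) := by
          refine Finset.prod_congr rfl fun j _ => ?_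
          rw [map_pow, ← genX_add_int]
      _ = ∏ j ∈ t, (genX K + ((j : ℤ) : CremonaField K)) ^ (b j) := hL
      _ = _ := by
          refine Finset.prod_congr rfl fun j _ => ?_
          rw [map_pow, ← genX_add_int]
  -- push to Polynomial K
  have hQ : (∏ j ∈ t, (Polynomial.X + ((j : ℤ) : Polynomial K)) ^ (a j))
      = ∏ j ∈ t, (Polynomial.X + ((j : ℤ) : Polynomial K)) ^ (b j) := by
    have h := congrArg (MvPolynomial.aeval ![Polynomial.X, (0 : Polynomial K)]) hpoly
    rw [map_prod, map_prod] at h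
    have key : ∀ (c : ℤ → ℕ),
        ∏ j ∈ t, (MvPolynomial.aeval ![Polynomial.X, (0 : Polynomial K)])
          ((X 0 + ((j : ℤ) : MvPolynomial (Fin 2) K)) ^ (c j))
        = ∏ j ∈ t, (Polynomial.X + ((j : ℤ) : Polynomial K)) ^ (c j) := by
      intro c
      refine Finset.prod_congr rfl fun j _ => ?_
      rw [map_pow, map_add, MvPolynomial.aeval_X, map_intCast]
      try norm_num
    rw [key a, key b] at h
    exact h
  haveI := Classical.decEq K
  have h1' := count_prod_roots (K := K) t a j0 hj0
  have h2' := count_prod_roots (K := K) t b j0 hj0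
  rw [hQ] at h1'
  have h3 : a j0 = b j0 := h1'.symm.trans h2'
  have h2 := hab j0
  omega

end Indep

section Main
variable {K : Type*} [Field K] [CharZero K]

/-- The subgroup of "triangular" automorphisms. -/
noncomputable def SGrp (K : Type*) [Field K] [CharZero K] :
    Subgroup (CremonaField K ≃ₐ[K] CremonaField K) where
  carrier := {g | ∃ c : ℤ, ∃ u ∈ Ux K, ∃ f ∈ Fx K,
    g (genX K) = genX K + c ∧ g (genY K) = (u : CremonaField K) * genY K + f}
  one_mem' := ⟨0, 1, one_mem _, 0, zero_mem _, by simp, by simp⟩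
  mul_mem' := by
    rintro g h ⟨c₁, u₁, hu₁, f₁, hf₁, hgx, hgy⟩ ⟨c₂, u₂, hu₂, f₂, hf₂, hhx, hhy⟩
    have hgF : g (genX K) ∈ Fx K := by
      rw [hgx]; exact add_mem (genX_mem_Fx K) (IntermediateField.intCast_mem _ _)
    refine ⟨c₁ + c₂, umap g u₂ * u₁, mul_mem (umap_mem_Ux g c₁ hgx hu₂) hu₁,
      g (u₂ : CremonaField K) * f₁ + g f₂,
      add_mem (mul_mem (map_mem_Fx g hgF (Ux_mem_Fx hu₂)) hf₁) (map_mem_Fx g hgF hf₂),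
      ?_, ?_⟩
    · rw [AlgEquiv.mul_apply, hhx, map_add, hgx, map_intCast]
      push_cast; ring
    · rw [AlgEquiv.mul_apply, hhy, map_add, map_mul, hgy, Units.val_mul, umap_coe]
      ring
  inv_mem' := by
    rintro g ⟨c, u, hu, f, hf, hgx, hgy⟩
    have hinv : ∀ z, g⁻¹ z = g.symm z := fun z => rfl
    have hx' : g⁻¹ (genX K) = genX K + ((-c : ℤ) : CremonaField K) := by
      have := congrArg g.symm hgx
      rw [AlgEquiv.symm_apply_apply, map_add, map_intCast] at this
      rw [hinv]
      push_cast
      linear_combination -this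
    have hxF : g⁻¹ (genX K) ∈ Fx K := by
      rw [hx']; exact add_mem (genX_mem_Fx K) (IntermediateField.intCast_mem _ _)
    have huinv : umap g⁻¹ u ∈ Ux K := umap_mem_Ux g⁻¹ (-c) hx' hu
    have hfinv : g⁻¹ f ∈ Fx K := map_mem_Fx g⁻¹ hxF hf
    refine ⟨-c, (umap g⁻¹ u)⁻¹, inv_mem huinv,
      -(((umap g⁻¹ u)⁻¹ : (CremonaField K)ˣ) : CremonaField K) * g⁻¹ f,
      mul_mem (neg_mem (by
        rw [Units.val_inv_eq_inv_val]
        exact inv_mem (Ux_mem_Fx huinv))) hfinv, hx', ?_⟩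
    have key := congrArg g.symm hgy
    rw [AlgEquiv.symm_apply_apply, map_add, map_mul] at key
    have hne : g.symm (u : CremonaField K) ≠ 0 := by
      have : g.symm (u : CremonaField K) = ((umap g⁻¹ u : (CremonaField K)ˣ) : CremonaField K) := rfl
      rw [this]; exact Units.ne_zero _
    rw [Units.val_inv_eq_inv_val, umap_coe]
    simp only [hinv]
    field_simp
    linear_combination -key
  end Main

theorem statement7 (K : Type*) [Field K] [CharZero K]
    (s a m : CremonaField K ≃ₐ[K] CremonaField K)
    (hsx : s (genX K) = genX K + 1) (hsy : s (genY K) = genY K)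
    (hax : a (genX K) = genX K) (hay : a (genY K) = genY K + 1)
    (hmx : m (genX K) = genX K) (hmy : m (genY K) = genX K * genY K) :
    Monoid.IsTorsionFree
      (Subgroup.closure {s, a, m} : Subgroup (CremonaField K ≃ₐ[K] CremonaField K)) := by
  have hS : (Subgroup.closure {s, a, m} :
      Subgroup (CremonaField K ≃ₐ[K] CremonaField K)) ≤ SGrp K := by
    rw [Subgroup.closure_le]
    intro g hg
    simp only [Set.mem_insert_iff, Set.mem_singleton_iff] at hg
    rcases hg with rfl | rfl | rfl
    · exact ⟨1, 1, one_mem _, 0, zero_mem _,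
        by rw [hsx]; push_cast; ring, by rw [hsy]; simp⟩
    · exact ⟨0, 1, one_mem _, 1, one_mem _,
        by rw [hax]; push_cast; ring, by rw [hay]; simp⟩
    · refine ⟨0, xunit K 0, Subgroup.subset_closure ⟨0, rfl⟩, 0, zero_mem _,
        by rw [hmx]; push_cast; ring, ?_⟩
      rw [hmy]
      show _ = (genX K + ((0 : ℤ) : CremonaField K)) * genY K + 0
      push_cast; ring
  intro g hg hfin
  obtain ⟨n, hn, hgn⟩ := isOfFinOrder_iff_pow_eq_one.mp hfin
  set σ := (g : CremonaField K ≃ₐ[K] CremonaField K) with hσdef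
  obtain ⟨c, u, hu, f, hf, hσx, hσy⟩ := hS g.2
  have hσn : σ ^ n = 1 := by
    have := congrArg (Subtype.val) hgn
    rw [SubgroupClass.coe_pow] at this
    exact this
  -- c = 0
  have powx : ∀ k : ℕ, (σ ^ k) (genX K) = genX K + (((k : ℤ) * c : ℤ) : CremonaField K) := by
    intro k
    induction k with
    | zero => simp
    | succ k ih =>
      rw [pow_succ', AlgEquiv.mul_apply, ih, map_add, map_intCast, hσx]
      push_cast; ring
  have hc0 : c = 0 := by
    have h1 := powx n
    rw [hσn] at h1
    have h2 : (((n : ℤ) * c : ℤ) : CremonaField K) = 0 := by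
      have : genX K = genX K + (((n : ℤ) * c : ℤ) : CremonaField K) := by
        simpa using h1
      linear_combination -this
    have h3 : (n : ℤ) * c = 0 := by exact_mod_cast h2
    rcases mul_eq_zero.mp h3 with h | h
    · exact absurd h (by exact_mod_cast hn.ne')
    · exact h
  rw [hc0] at hσx
  have hσx0 : σ (genX K) = genX K := by simpa using hσx
  have hufix : σ ((u : (CremonaField K)ˣ) : CremonaField K) = u :=
    map_fix_Fx σ hσx0 (Ux_mem_Fx hu)
  have hffix : σ f = f := map_fix_Fx σ hσx0 hf
  -- powers on y
  have powy : ∀ k : ℕ, (σ ^ k) (genY K)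
      = ((u : CremonaField K)) ^ k * genY K
        + (∑ i ∈ Finset.range k, ((u : CremonaField K)) ^ i) * f := by
    intro k
    induction k with
    | zero => simp
    | succ k ih =>
      rw [pow_succ', AlgEquiv.mul_apply, ih, map_add, map_mul, map_mul, map_pow,
        hufix, hffix, map_sum]
      simp only [map_pow, hufix]
      show (u : CremonaField K) ^ k * (σ (genY K)) + _ = _
      rw [hσy, Finset.sum_range_succ]
      ring
  have hEq : (u : CremonaField K) ^ n * genY K
      + (∑ i ∈ Finset.range n, (u : CremonaField K) ^ i) * f = genY K := by
    have h := powy n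
    rw [hσn] at h
    simpa using h.symm
  have hun : (u : CremonaField K) ^ n = 1 := by
    by_contra h
    have hne : (1 : CremonaField K) - (u : CremonaField K) ^ n ≠ 0 :=
      sub_ne_zero.mpr (Ne.symm h)
    have hyF : genY K ∈ Fx K := by
      have hyEq : genY K = ((∑ i ∈ Finset.range n, (u : CremonaField K) ^ i) * f)
          / (1 - (u : CremonaField K) ^ n) := by
        rw [eq_div_iff hne]
        linear_combination -hEq
      rw [hyEq]
      exact div_mem (mul_mem (sum_mem fun i _ => pow_mem (Ux_mem_Fx hu) i) hf)
        (sub_mem (one_mem _) (pow_mem (Ux_mem_Fx hu) n))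
    exact genY_not_mem_Fx a hax hay hyF
  have hu1 : (u : CremonaField K) = 1 := by
    obtain ⟨ν, hν⟩ := Ux_rep hu
    have hprod : ∏ j ∈ ν.support, (genX K + ((j : ℤ) : CremonaField K)) ^ (ν j * (n : ℤ)) = 1 := by
      have heq2 : ∏ j ∈ ν.support, (genX K + ((j : ℤ) : CremonaField K)) ^ (ν j * (n : ℤ))
          = ((u : CremonaField K)) ^ n := by
        rw [hν, Finsupp.prod, ← Finset.prod_pow]
        refine Finset.prod_congr rfl fun j _ => ?_
        rw [← zpow_natCast ((genX K + ((j : ℤ) : CremonaField K)) ^ (ν j)) n, ← zpow_mul]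
      rw [heq2, hun]
    have hz := indep ν.support (fun j => ν j * (n : ℤ)) hprod
    have hν0 : ν = 0 := by
      ext j
      by_cases hj : j ∈ ν.support
      · have h1 := hz j hj
        have h2 : ν j = 0 := by
          rcases mul_eq_zero.mp h1 with h | h
          · exact h
          · exact absurd h (by exact_mod_cast hn.ne')
        simpa using h2
      · simpa using Finsupp.notMem_support_iff.mp hj
    rw [hν, hν0]
    simp
  have hf0 : f = 0 := by
    have h1 : genY K + (n : CremonaField K) * f = genY K := by
      rw [hu1] at hEq
      simpa using hEq
    have h2 : (n : CremonaField K) * f = 0 := by linear_combination h1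
    rcases mul_eq_zero.mp h2 with h | h
    · exact absurd h (by exact_mod_cast hn.ne')
    · exact h
  have hσ1 : σ = 1 := fix_ext K σ hσx0 (by rw [hσy, hu1, hf0]; ring)
  exact hg (Subtype.ext hσ1)
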